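/- arXiv:1803.10897 — 6 statements merged into one kernel-verified Lean document; each statement's English description precedes it below -/
import Mathlib

section
/- Let (R, I) be a henselian pair of commutative rings. Then for every element s ∈ I and every integer n ≥ 1, the equation x − s·x^n = 1 has a solution x ∈ R. -/
open Polynomial

/-- Let `(R, I)` be a henselian pair of commutative rings. Then for every `s ∈ I` and
every `n ≥ 1`, the equation `x - s * x ^ n = 1` has a solution in `R`. -/
theorem henselian_pair_solve_eq (R : Type*) [CommRing R] (I : Ideal R) [HenselianRing R I]
    (s : R) (hs : s ∈ I) (n : ℕ) (hn : 1 ≤ n) :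
    ∃ x : R, x - s * x ^ n = 1 := by
  obtain ⟨m, rfl⟩ : ∃ m, n = m + 1 := ⟨n - 1, (Nat.succ_pred_eq_of_pos hn).symm⟩
  -- consider f(Y) = Y^(m+1) - Y^m + s, solve f(y)=0 with y ≡ 1 mod I, take x = y⁻¹
  set f : R[X] := X ^ (m + 1) + (C s - X ^ m) with hf
  have hmonic : f.Monic := by
    apply monic_X_pow_add
    refine lt_of_le_of_lt (degree_sub_le _ _) (max_lt ?_ ?_)
    · exact lt_of_le_of_lt degree_C_le (by exact_mod_cast Nat.succ_pos m)
    · exact lt_of_le_of_lt (Polynomial.degree_X_pow_le m) (by exact_mod_cast Nat.lt_succ_self m)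
  have heval : f.eval 1 ∈ I := by simp [hf, hs]
  have hderiv : IsUnit (Ideal.Quotient.mk I (f.derivative.eval 1)) := by
    have hd : f.derivative.eval 1 = 1 := by
      simp [hf, derivative_X_pow]
    rw [hd]
    simp
  obtain ⟨y, hy, hyI⟩ := HenselianRing.is_henselian f hmonic 1 heval hderiv
  have hyunit : IsUnit y := by
    have hj := HenselianRing.jac (R := R) (I := I) hyI
    rw [Ideal.mem_jacobson_bot] at hj
    simpa using hj 1
  obtain ⟨u, rfl⟩ := hyunit
  refine ⟨(↑u⁻¹ : R), ?_⟩
  have hroot : (u : R) ^ (m + 1) - (u : R) ^ m + s = 0 := by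
    have h := hy
    simp only [hf, IsRoot, eval_add, eval_sub, eval_pow, eval_X, eval_C] at h
    linear_combination h
  have hinv : (↑u⁻¹ : R) * u = 1 := u.inv_mul
  have key : (1 : R) - (↑u⁻¹ : R) + s * (↑u⁻¹ : R) ^ (m + 1) = 0 := by
    have h3 : (↑u⁻¹ : R) ^ (m + 1) * (u : R) ^ (m + 1) = 1 := by
      rw [← mul_pow, hinv, one_pow]
    have h4 : (↑u⁻¹ : R) ^ (m + 1) * (u : R) ^ m = (↑u⁻¹ : R) := by
      rw [pow_succ, mul_comm ((↑u⁻¹ : R) ^ m) _, mul_assoc, ← mul_pow, hinv, one_pow, mul_one]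
    calc (1 : R) - (↑u⁻¹ : R) + s * (↑u⁻¹ : R) ^ (m + 1)
        = (↑u⁻¹ : R) ^ (m + 1) * ((u : R) ^ (m + 1) - (u : R) ^ m + s) := by
          rw [mul_add, mul_sub, h3, h4]; ring
      _ = 0 := by rw [hroot, mul_zero]
  linear_combination -key
end

section
/- Let R be a commutative ring and I ⊆ R an ideal with the following property: for every integer n ≥ 1 and every polynomial g ∈ R[X] all of whose coefficients lie in I, there exists x ∈ I with x·(1 + x)^{n−1} + g(x) = 0. Then 1 + y is a unit of R for every y ∈ I; equivalently, I is contained in the Jacobson radical of R. -/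
/-- If an ideal `I` of a commutative ring `R` is henselian as a nonunital ring (i.e. for
every `n ≥ 1` and every polynomial `g` with coefficients in `I`, the equation
`x * (1 + x) ^ (n - 1) + g(x) = 0` has a solution `x ∈ I`), then `1 + y` is a unit for
every `y ∈ I`; equivalently, `I` is contained in the Jacobson radical of `R`. -/
theorem henselian_nonunital_local (R : Type*) [CommRing R] (I : Ideal R)
    (h : ∀ n : ℕ, 1 ≤ n → ∀ g : Polynomial R, (∀ i, g.coeff i ∈ I) →
      ∃ x ∈ I, x * (1 + x) ^ (n - 1) + g.eval x = 0) :
    (∀ y ∈ I, IsUnit (1 + y)) ∧ I ≤ (⊥ : Ideal R).jacobson := by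
  have key : ∀ y ∈ I, IsUnit (1 + y) := by
    intro y hy
    obtain ⟨x, hxI, hx⟩ := h 1 le_rfl (Polynomial.C y * Polynomial.X + Polynomial.C y) (by
      intro i
      simp only [Polynomial.coeff_add, Polynomial.coeff_C_mul, Polynomial.coeff_X,
        Polynomial.coeff_C]
      rcases i with _ | _ | i <;> simp [hy, I.zero_mem])
    simp only [Polynomial.eval_add, Polynomial.eval_mul, Polynomial.eval_C,
      Polynomial.eval_X, pow_zero, mul_one] at hx
    refine IsUnit.of_mul_eq_one (1 + x) ?_
    ring_nf
    ring_nf at hx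
    linear_combination hx
  refine ⟨key, fun y hy => ?_⟩
  rw [Ideal.mem_jacobson_bot]
  intro z
  have := key (y * z) (I.mul_mem_right z hy)
  rwa [add_comm] at this
end

section
/- Let (R, I) be a henselian pair of commutative rings, and let M and N be finitely generated projective R-modules. If M/IM and N/IN are isomorphic as R/I-modules, then M and N are isomorphic as R-modules. -/
/-- Let `(R, I)` be a henselian pair and `M`, `N` finitely generated projective
`R`-modules. If `M/IM ≅ N/IN` as `R/I`-modules, then `M ≅ N` as `R`-modules. -/
theorem projective_iso_of_quotient_iso_henselian
    (R : Type*) [CommRing R] (I : Ideal R) [HenselianRing R I]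
    (M N : Type*) [AddCommGroup M] [Module R M] [AddCommGroup N] [Module R N]
    [Module.Finite R M] [Module.Projective R M]
    [Module.Finite R N] [Module.Projective R N]
    (e : Nonempty ((M ⧸ (I • ⊤ : Submodule R M)) ≃ₗ[R ⧸ I]
      (N ⧸ (I • ⊤ : Submodule R N)))) :
    Nonempty (M ≃ₗ[R] N) := by
  obtain ⟨eb⟩ := e
  have hjac : I ≤ Ideal.jacobson ⊥ := HenselianRing.jac
  set pM : M →ₗ[R] M ⧸ (I • ⊤ : Submodule R M) := (I • ⊤ : Submodule R M).mkQ with hpM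
  set pN : N →ₗ[R] N ⧸ (I • ⊤ : Submodule R N) := (I • ⊤ : Submodule R N).mkQ with hpN
  -- The R-linear map scalar restriction issue: build g by hand
  have smul_quot : ∀ (r : R) (y : N ⧸ (I • ⊤ : Submodule R N)),
      (Ideal.Quotient.mk I r) • y = r • y := by
    intro r y
    obtain ⟨n, rfl⟩ := Submodule.Quotient.mk_surjective _ y
    rw [Module.Quotient.mk_smul_mk, Submodule.Quotient.mk_smul]
  have smul_quotM : ∀ (r : R) (y : M ⧸ (I • ⊤ : Submodule R M)),
      (Ideal.Quotient.mk I r) • y = r • y := by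
    intro r y
    obtain ⟨m, rfl⟩ := Submodule.Quotient.mk_surjective _ y
    rw [Module.Quotient.mk_smul_mk, Submodule.Quotient.mk_smul]
  let g : M →ₗ[R] N ⧸ (I • ⊤ : Submodule R N) :=
    { toFun := fun m => eb (pM m)
      map_add' := fun x y => by simp
      map_smul' := fun r x => by
        simp only [RingHom.id_apply]
        rw [map_smul, ← smul_quotM, map_smul, smul_quot] }
  -- lift g through pN by projectivity of M
  obtain ⟨φ, hφ⟩ := Module.projective_lifting_property pN g
    (Submodule.mkQ_surjective _)
  have hg : ∀ m : M, pN (φ m) = eb (pM m) := fun m => LinearMap.congr_fun hφ m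
  -- φ is surjective: Nakayama
  have hrange : LinearMap.range φ ⊔ (I • ⊤ : Submodule R N) = ⊤ := by
    rw [eq_top_iff]
    intro n _
    obtain ⟨x, hx⟩ : ∃ x : M ⧸ (I • ⊤ : Submodule R M), eb x = pN n := ⟨eb.symm (pN n), eb.apply_symm_apply _⟩
    obtain ⟨m, rfl⟩ := Submodule.Quotient.mk_surjective _ x
    have : pN (φ m) = pN n := by rw [hg]; exact hx
    have hmem : n - φ m ∈ (I • ⊤ : Submodule R N) :=
      (Submodule.Quotient.eq _).mp this.symm
    have hn : n = φ m + (n - φ m) := by abel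
    rw [hn]
    exact Submodule.add_mem_sup (LinearMap.mem_range_self φ m) hmem
  have hsurj : Function.Surjective φ := by
    rw [← LinearMap.range_eq_top]
    by_contra hne
    -- pass to quotient Q = N ⧸ range φ
    set Q := N ⧸ LinearMap.range φ
    have hQfg : (⊤ : Submodule R Q).FG := Module.Finite.fg_top
    have hQ : (⊤ : Submodule R Q) ≤ I • (⊤ : Submodule R Q) := by
      have h1 : Submodule.map (LinearMap.range φ).mkQ (LinearMap.range φ ⊔ (I • ⊤ : Submodule R N)) = ⊤ := by
        rw [hrange, Submodule.map_top, Submodule.range_mkQ]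
      rw [Submodule.map_sup, Submodule.map_smul'', Submodule.map_top, Submodule.range_mkQ] at h1
      have h2 : Submodule.map (LinearMap.range φ).mkQ (LinearMap.range φ) = ⊥ :=
        Submodule.mkQ_map_self _
      rw [h2, bot_sup_eq] at h1
      rw [h1]
    have := Submodule.eq_bot_of_le_smul_of_le_jacobson_bot I ⊤ hQfg hQ hjac
    have hQsub : Subsingleton Q := Submodule.Quotient.subsingleton_iff.mpr
      (by rw [← Submodule.ker_mkQ (LinearMap.range φ), eq_top_iff]
          intro x _
          rw [LinearMap.mem_ker]
          have : Submodule.Quotient.mk (p := LinearMap.range φ) x ∈ (⊥ : Submodule R Q) := this ▸ trivial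
          simpa using this)
    exact hne (Submodule.Quotient.subsingleton_iff.mp hQsub)
  -- splitting: section s of φ by projectivity of N
  obtain ⟨s, hs⟩ := Module.projective_lifting_property φ LinearMap.id hsurj
  -- ker φ ≤ I • ⊤
  have hker_le : LinearMap.ker φ ≤ (I • ⊤ : Submodule R M) := by
    intro x hx
    rw [LinearMap.mem_ker] at hx
    have : eb (pM x) = 0 := by rw [← hg, hx, map_zero]
    have : pM x = 0 := by
      apply eb.injective; rw [this, map_zero]
    rwa [hpM, ← LinearMap.mem_ker, Submodule.ker_mkQ] at this
  -- q := id - s ∘ φ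
  set q : M →ₗ[R] M := LinearMap.id - s ∘ₗ φ with hq
  have hq_ker : ∀ x ∈ LinearMap.ker φ, q x = x := by
    intro x hx
    rw [LinearMap.mem_ker] at hx
    simp [hq, hx]
  have hq_range : LinearMap.range q ≤ LinearMap.ker φ := by
    rintro _ ⟨x, rfl⟩
    rw [LinearMap.mem_ker]
    have := congrFun (congrArg DFunLike.coe hs) (φ x)
    simp only [LinearMap.coe_comp, Function.comp_apply, LinearMap.id_coe, id_eq] at this
    simp [hq, this]
  have hker_eq : LinearMap.ker φ = LinearMap.range q := by
    apply le_antisymm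
    · intro x hx
      exact ⟨x, hq_ker x hx⟩
    · exact hq_range
  have hker_fg : (LinearMap.ker φ).FG := by
    rw [hker_eq, LinearMap.range_eq_map]
    exact Submodule.FG.map q Module.Finite.fg_top
  have hker_smul : LinearMap.ker φ ≤ I • LinearMap.ker φ := by
    intro x hx
    have hxI : x ∈ (I • ⊤ : Submodule R M) := hker_le hx
    have : q x ∈ Submodule.map q (I • ⊤ : Submodule R M) := Submodule.mem_map_of_mem hxI
    rw [Submodule.map_smul'', Submodule.map_top] at this
    rw [← hq_ker x hx]
    exact Submodule.smul_mono le_rfl (hker_eq.symm ▸ le_rfl) this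
  have hker_bot : LinearMap.ker φ = ⊥ :=
    Submodule.eq_bot_of_le_smul_of_le_jacobson_bot I _ hker_fg hker_smul hjac
  exact ⟨LinearEquiv.ofBijective φ ⟨LinearMap.ker_eq_bot.mp hker_bot, hsurj⟩⟩
end

section
/- Let C be a category admitting countable coproducts, and let ⋯ → F_r → F_{r−1} → ⋯ → F_1 be a tower of functors from C to the category of abelian groups, with transition natural transformations f_r : F_{r+1} → F_r. Suppose: (1) for each object X of C, the homomorphism Φ_X : ∏_{r≥1} F_r(X) → ∏_{r≥1} F_r(X) sending (a_r)_r to (a_r − f_r(a_{r+1}))_r is bijective (equivalently, the inverse limit and lim¹ of the tower of abelian groups {F_r(X)}_r both vanish); (2) for each r, the functor F_r preserves countable coproducts. Then the tower {F_r}_r is pro-zero: for every r there exists s > r such that the composite natural transformation F_s → F_r is zero. -/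
open CategoryTheory
open CategoryTheory.Limits

/-- The composite transition map `F (r + k) ⟶ F r` of a tower of functors
`⋯ → F_{r+1} → F_r → ⋯` into abelian groups. -/
def towerFunctorComp {C : Type*} [Category C] (F : ℕ → C ⥤ AddCommGrpCat)
    (f : ∀ r, F (r + 1) ⟶ F r) : ∀ (r k : ℕ), F (r + k) ⟶ F r
  | r, 0 => 𝟙 (F r)
  | r, k + 1 => f (r + k) ≫ towerFunctorComp F f r k

namespace TPZ

section proj
variable {C : Type*} [Category C] [HasColimitsOfShape (Discrete ℕ) C]
variable (G : C ⥤ AddCommGrpCat) [PreservesColimitsOfShape (Discrete ℕ) G]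
variable (X : ℕ → C)

noncomputable def dsCocone : Cocone (Discrete.functor X ⋙ G) :=
  ⟨AddCommGrpCat.of (Π₀ k, G.obj (X k)),
    Discrete.natTrans fun k =>
      AddCommGrpCat.ofHom (DFinsupp.singleAddHom (fun k => G.obj (X k)) k.as : G.obj (X k.as) →+ _)⟩

noncomputable def proj : G.obj (∐ X) ⟶ AddCommGrpCat.of (Π₀ k, G.obj (X k)) :=
  (isColimitOfPreserves G (colimit.isColimit (Discrete.functor X))).desc (dsCocone G X)

lemma proj_fac (k : ℕ) (y : G.obj (X k)) :
    proj G X (G.map (Sigma.ι X k) y) =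
      DFinsupp.singleAddHom (fun k => G.obj (X k)) k y := by
  have h := (isColimitOfPreserves G (colimit.isColimit (Discrete.functor X))).fac
    (dsCocone G X) ⟨k⟩
  have h2 := congrArg (fun (φ : G.obj (X k) ⟶ AddCommGrpCat.of (Π₀ k, G.obj (X k))) => φ y) h
  exact h2

lemma proj_sum (x : G.obj (∐ X)) :
    (DFinsupp.sumAddHom (fun k => ((G.map (Sigma.ι X k)).hom : G.obj (X k) →+ G.obj (∐ X))))
      (proj G X x) = x := by
  have h : proj G X ≫ (AddCommGrpCat.ofHom (DFinsupp.sumAddHom (fun k => ((G.map (Sigma.ι X k)).hom :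
      G.obj (X k) →+ G.obj (∐ X)))) : AddCommGrpCat.of (Π₀ k, G.obj (X k)) ⟶ G.obj (∐ X)) =
      𝟙 (G.obj (∐ X)) := by
    apply (isColimitOfPreserves G (colimit.isColimit (Discrete.functor X))).hom_ext
    intro ⟨k⟩
    ext y
    simp only [Functor.mapCocone_ι_app, Category.comp_id, comp_apply]
    show (DFinsupp.sumAddHom fun k => ((G.map (Sigma.ι X k)).hom : G.obj (X k) →+ G.obj (∐ X)))
      (proj G X (G.map (Sigma.ι X k) y)) = G.map (Sigma.ι X k) y
    rw [proj_fac, DFinsupp.singleAddHom_apply, DFinsupp.sumAddHom_single]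
  have := congrArg (fun (φ : G.obj (∐ X) ⟶ G.obj (∐ X)) => φ x) h
  simpa using this

end proj

section tower
variable {C : Type*} [Category C] (F : ℕ → C ⥤ AddCommGrpCat) (f : ∀ r, F (r + 1) ⟶ F r)

lemma comp_succ (r k : ℕ) :
    towerFunctorComp F f r (k+1) = f (r+k) ≫ towerFunctorComp F f r k := rfl

lemma f_eqToHom {a b : ℕ} (h : a = b) :
    f a ≫ eqToHom (congrArg F h) = eqToHom (congrArg (fun n => F (n+1)) h) ≫ f b := by
  subst h; simp

lemma comp_succ_left (r k : ℕ) :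
    towerFunctorComp F f r (k+1) =
      eqToHom (congrArg F (by omega : r + (k+1) = (r+1) + k)) ≫
        towerFunctorComp F f (r+1) k ≫ f r := by
  induction k with
  | zero => simp [towerFunctorComp]
  | succ k ih =>
    rw [comp_succ, ih, comp_succ]
    rw [← Category.assoc (f (r + (k+1)))]
    rw [f_eqToHom F f (show r + (k+1) = (r+1) + k by omega)]
    simp

end tower

section exhaust
variable {C : Type*} [Category C] [HasColimitsOfShape (Discrete ℕ) C]
variable (F : ℕ → C ⥤ AddCommGrpCat) (f : ∀ r, F (r + 1) ⟶ F r)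

lemma exhaust
    (h1 : ∀ X : C, Function.Bijective
      (fun (a : ∀ r, ((F r).obj X)) => (fun r => a r - ((f r).app X) (a (r + 1)) :
        ∀ r, ((F r).obj X))))
    (h2i : ∀ s, PreservesColimitsOfShape (Discrete ℕ) (F s))
    (r : ℕ) (X : ℕ → C) (α : ∀ k, (F (r + k)).obj (X k)) :
    ∃ K, ∀ k ≥ K, ∃ β : (F (r + (k + 1))).obj (X k),
      (towerFunctorComp F f r (k + 1)).app (X k) β
        = (towerFunctorComp F f r k).app (X k) (α k) := by
  classical
  haveI := h2i
  -- the target sequence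
  set a : ∀ s, (F s).obj (∐ X) := fun s =>
    if h : r ≤ s then
      (eqToHom (congrArg F (Nat.add_sub_cancel' h))).app (∐ X)
        ((F (r + (s - r))).map (Sigma.ι X (s - r)) (α (s - r)))
    else 0 with ha
  have a_spec : ∀ k, a (r + k) = (F (r + k)).map (Sigma.ι X k) (α k) := by
    intro k
    rw [ha]
    dsimp only
    rw [dif_pos (Nat.le_add_right r k)]
    have gen : ∀ (m : ℕ) (hm : m = k) (h : r + m = r + k),
        (eqToHom (congrArg F h)).app (∐ X) ((F (r + m)).map (Sigma.ι X m) (α m))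
          = (F (r + k)).map (Sigma.ι X k) (α k) := by
      rintro m rfl h
      rfl
    exact gen _ (by omega) (by omega)
  obtain ⟨c, hc⟩ := (h1 (∐ X)).surjective a
  have hc' : ∀ s, c s = a s + (f s).app (∐ X) (c (s + 1)) := by
    intro s
    have h := congrFun hc s
    simp only at h
    rw [← h]
    abel
  -- telescoping
  have tel : ∀ k, c r =
      (∑ j ∈ Finset.range k, (towerFunctorComp F f r j).app (∐ X) (a (r + j)))
        + (towerFunctorComp F f r k).app (∐ X) (c (r + k)) := by
    intro k
    induction k with
    | zero => simp [towerFunctorComp]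
    | succ k ih =>
      rw [ih, hc' (r + k), map_add, Finset.sum_range_succ]
      have hT : (towerFunctorComp F f r (k+1)).app (∐ X) (c (r + (k+1)))
          = (towerFunctorComp F f r k).app (∐ X) (((f (r + k)).app (∐ X)) (c (r + k + 1))) := rfl
      rw [hT]
      abel
  -- finite support of c r in the direct sum
  set d : Π₀ k, (F r).obj (X k) := proj (F r) X (c r) with hd
  set K := d.support.sup id + 1 with hK
  refine ⟨K, fun k hk => ?_⟩
  have hknot : d k = 0 := by
    by_contra hne
    have : k ∈ d.support := DFinsupp.mem_support_iff.2 hne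
    have := Finset.le_sup (f := id) this
    simp only [id_eq] at this
    omega
  -- decompose c (r + (k + 1)) as a finite sum of elements from the summands
  set e : Π₀ i, ((F (r + (k + 1))).obj (X i)) :=
    proj (F (r + (k + 1))) X (c (r + (k + 1))) with he
  have hzdec : c (r + (k + 1)) =
      ∑ i ∈ e.support, (F (r + (k + 1))).map (Sigma.ι X i) (e i) := by
    conv_lhs => rw [← proj_sum (F (r + (k + 1))) X (c (r + (k + 1)))]
    rw [DFinsupp.sumAddHom_apply]
    rfl
  have natl : ∀ (s i : ℕ) (x : ((F (r + s)).obj (X i))),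
      (towerFunctorComp F f r s).app (∐ X) ((F (r + s)).map (Sigma.ι X i) x)
        = (F r).map (Sigma.ι X i) ((towerFunctorComp F f r s).app (X i) x) := by
    intro s i x
    have h := (towerFunctorComp F f r s).naturality (Sigma.ι X i)
    have h2 := congrArg (fun (φ : (F (r + s)).obj (X i) ⟶ (F r).obj (∐ X)) => φ x) h
    simpa only [comp_apply] using h2
  have main := tel (k + 1)
  rw [hzdec, map_sum] at main
  have hπ := congrArg (fun x => (show Π₀ i, ((F r).obj (X i)) from proj (F r) X x) k) main
  dsimp only at hπ
  have u_eq : ∀ j, (proj (F r) X ((towerFunctorComp F f r j).app (∐ X) (a (r + j)))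
      : Π₀ i, ((F r).obj (X i)))
      = DFinsupp.single j ((towerFunctorComp F f r j).app (X j) (α j)) := by
    intro j
    rw [a_spec, natl, proj_fac, DFinsupp.singleAddHom_apply]
  have v_eq : ∀ i, (proj (F r) X ((towerFunctorComp F f r (k + 1)).app (∐ X)
        ((F (r + (k + 1))).map (Sigma.ι X i) (e i))) : Π₀ i, ((F r).obj (X i)))
      = DFinsupp.single i ((towerFunctorComp F f r (k + 1)).app (X i) (e i)) := by
    intro i
    rw [natl, proj_fac, DFinsupp.singleAddHom_apply]
  rw [map_add, map_sum, map_sum] at hπ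
  simp only [u_eq, v_eq] at hπ
  rw [DFinsupp.add_apply, DFinsupp.finset_sum_apply, DFinsupp.finset_sum_apply] at hπ
  have S1 : (∑ j ∈ Finset.range (k + 1),
      (DFinsupp.single j ((towerFunctorComp F f r j).app (X j) (α j)) :
        Π₀ i, ((F r).obj (X i))) k) = (towerFunctorComp F f r k).app (X k) (α k) := by
    calc (∑ j ∈ Finset.range (k + 1),
        (DFinsupp.single j ((towerFunctorComp F f r j).app (X j) (α j)) :
          Π₀ i, ((F r).obj (X i))) k)
        = (DFinsupp.single k ((towerFunctorComp F f r k).app (X k) (α k)) :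
          Π₀ i, ((F r).obj (X i))) k :=
          Finset.sum_eq_single k (fun j _ hj => DFinsupp.single_eq_of_ne hj.symm)
            (fun h => absurd (Finset.self_mem_range_succ k) h)
      _ = _ := DFinsupp.single_eq_same
  have S2 : (∑ i ∈ e.support,
      (DFinsupp.single i ((towerFunctorComp F f r (k + 1)).app (X i) (e i)) :
        Π₀ i, ((F r).obj (X i))) k) = (towerFunctorComp F f r (k + 1)).app (X k) (e k) := by
    calc (∑ i ∈ e.support,
        (DFinsupp.single i ((towerFunctorComp F f r (k + 1)).app (X i) (e i)) :
          Π₀ i, ((F r).obj (X i))) k)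
        = (DFinsupp.single k ((towerFunctorComp F f r (k + 1)).app (X k) (e k)) :
          Π₀ i, ((F r).obj (X i))) k :=
          Finset.sum_eq_single k (fun i _ hi => DFinsupp.single_eq_of_ne hi.symm)
            (fun h => by rw [DFinsupp.notMem_support_iff.1 h, map_zero]; simp)
      _ = _ := DFinsupp.single_eq_same
  rw [S1, S2] at hπ
  -- hπ : proj (c r) k = comp r k (α k) + comp r (k+1) (e k), LHS = d k = 0
  refine ⟨-(e k), ?_⟩
  rw [map_neg]
  have h0 : (0 : (F r).obj (X k)) = (towerFunctorComp F f r k).app (X k) (α k)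
      + (towerFunctorComp F f r (k + 1)).app (X k) (e k) := by
    rw [← hπ]; exact hknot.symm
  exact neg_eq_of_add_eq_zero_right ((add_comm _ _).trans h0.symm)
end exhaust

section rest
variable {C : Type*} [Category C] [HasColimitsOfShape (Discrete ℕ) C]
variable (F : ℕ → C ⥤ AddCommGrpCat) (f : ∀ r, F (r + 1) ⟶ F r)

lemma tp_tp {a b c' : ℕ} (p : a = b) (q : b = c') (X : C) (x : ((F a).obj X)) :
    (eqToHom (congrArg F q)).app X ((eqToHom (congrArg F p)).app X x)
      = (eqToHom (congrArg F (p.trans q))).app X x := by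
  subst p; subst q; rfl

lemma range_mono (r : ℕ) : ∀ (j k m : ℕ), m = k + j → ∀ (X : C) (x : ((F r).obj X)),
    (∃ β : ((F (r + m)).obj X), (towerFunctorComp F f r m).app X β = x) →
    ∃ β : ((F (r + k)).obj X), (towerFunctorComp F f r k).app X β = x := by
  intro j
  induction j with
  | zero =>
    intro k m hm X x h
    subst hm
    exact h
  | succ j ih =>
    intro k m hm X x h
    subst hm
    obtain ⟨β, hβ⟩ := h
    exact ih k (k + j) rfl X x ⟨(f (r + (k + j))).app X β, hβ⟩

lemma key (X₀ : C)
    (h1 : ∀ X : C, Function.Bijective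
      (fun (a : ∀ r, ((F r).obj X)) => (fun r => a r - ((f r).app X) (a (r + 1)) :
        ∀ r, ((F r).obj X))))
    (h2i : ∀ s, PreservesColimitsOfShape (Discrete ℕ) (F s)) (r : ℕ) :
    ∃ K, ∀ k ≥ K, ∀ (X : C) (α : ((F (r + k)).obj X)),
      ∃ β : ((F (r + (k + 1))).obj X),
        (towerFunctorComp F f r (k + 1)).app X β = (towerFunctorComp F f r k).app X α := by
  classical
  have pick : ∀ k : ℕ, ∃ (Y : C) (A : ((F (r + k)).obj Y)),
      (¬ (∀ (X : C) (α : ((F (r + k)).obj X)), ∃ β,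
          (towerFunctorComp F f r (k + 1)).app X β
            = (towerFunctorComp F f r k).app X α)) →
        ∀ β, (towerFunctorComp F f r (k + 1)).app Y β
          ≠ (towerFunctorComp F f r k).app Y A := by
    intro k
    by_cases h : ∀ (X : C) (α : ((F (r + k)).obj X)), ∃ β,
        (towerFunctorComp F f r (k + 1)).app X β = (towerFunctorComp F f r k).app X α
    · exact ⟨X₀, 0, fun hn => absurd h hn⟩
    · push_neg at h
      obtain ⟨Y, A, hA⟩ := h
      exact ⟨Y, A, fun _ => hA⟩
  choose Y A hYA using pick
  obtain ⟨K, hK⟩ := exhaust F f h1 h2i r Y A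
  refine ⟨K, fun k hk => ?_⟩
  by_contra hn
  obtain ⟨β, hβ⟩ := hK k hk
  exact hYA k hn β hβ

lemma provanish (X₀ : C)
    (h1 : ∀ X : C, Function.Bijective
      (fun (a : ∀ r, ((F r).obj X)) => (fun r => a r - ((f r).app X) (a (r + 1)) :
        ∀ r, ((F r).obj X))))
    (h2i : ∀ s, PreservesColimitsOfShape (Discrete ℕ) (F s)) :
    ∀ r : ℕ, ∃ k : ℕ, 0 < k ∧ towerFunctorComp F f r k = 0 := by
  classical
  choose K hK using key F f X₀ h1 h2i
  -- climbing above the stable range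
  have up : ∀ (r j : ℕ) (X : C) (x : ((F r).obj X)),
      (∃ β, (towerFunctorComp F f r (K r)).app X β = x) →
      ∃ β : ((F (r + (K r + j))).obj X), (towerFunctorComp F f r (K r + j)).app X β = x := by
    intro r j X x
    induction j with
    | zero => exact fun h => h
    | succ j ih =>
      intro h
      obtain ⟨β, hβ⟩ := ih h
      obtain ⟨γ, hγ⟩ := hK r (K r + j) (by omega) X β
      exact ⟨γ, hγ.trans hβ⟩
  -- membership in the stable range gives membership in all ranges
  have s4 : ∀ (r : ℕ) (X : C) (x : ((F r).obj X)),
      (∃ β, (towerFunctorComp F f r (K r)).app X β = x) →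
      ∀ k, ∃ β : ((F (r + k)).obj X), (towerFunctorComp F f r k).app X β = x := by
    intro r X x h k
    rcases le_or_gt k (K r) with hle | hlt
    · exact range_mono F f r (K r - k) k (K r) (by omega) X x h
    · exact range_mono F f r 0 k (K r + (k - K r)) (by omega) X x (up r (k - K r) X x h)
  -- lifting elements of the stable range along f
  have lift : ∀ (r : ℕ) (X : C) (g : ((F r).obj X)),
      (∀ k, ∃ β : ((F (r + k)).obj X), (towerFunctorComp F f r k).app X β = g) →
      ∃ h' : ((F (r + 1)).obj X),
        (∀ k, ∃ β : ((F (r + 1 + k)).obj X),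
          (towerFunctorComp F f (r + 1) k).app X β = h') ∧ (f r).app X h' = g := by
    intro r X g hg
    obtain ⟨α, hα⟩ := hg (K (r + 1) + 1)
    set γ := (eqToHom (congrArg F (by omega : r + (K (r + 1) + 1) = (r + 1) + K (r + 1)))).app X α
      with hγ
    have hgl : (f r).app X ((towerFunctorComp F f (r + 1) (K (r + 1))).app X γ) = g := by
      rw [← hα, comp_succ_left F f r (K (r + 1))]
      rfl
    exact ⟨(towerFunctorComp F f (r + 1) (K (r + 1))).app X γ,
      s4 (r + 1) X _ ⟨γ, rfl⟩, hgl⟩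
  -- elements of the stable range vanish
  have vanish : ∀ (r : ℕ) (X : C) (g : ((F r).obj X)),
      (∀ k, ∃ β : ((F (r + k)).obj X), (towerFunctorComp F f r k).app X β = g) → g = 0 := by
    intro r X g hg
    have step : ∀ (m : ℕ) (x : ((F (r + m)).obj X)),
        (∀ k, ∃ β : ((F (r + m + k)).obj X), (towerFunctorComp F f (r + m) k).app X β = x) →
        ∃ y : ((F (r + m + 1)).obj X),
          (∀ k, ∃ β : ((F (r + m + 1 + k)).obj X),
            (towerFunctorComp F f (r + m + 1) k).app X β = y) ∧ (f (r + m)).app X y = x :=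
      fun m => lift (r + m) X
    let D : ∀ m : ℕ, {x : ((F (r + m)).obj X) //
        ∀ k, ∃ β : ((F (r + m + k)).obj X), (towerFunctorComp F f (r + m) k).app X β = x} :=
      fun m => Nat.rec ⟨g, hg⟩
        (fun m p => ⟨(step m p.1 p.2).choose, (step m p.1 p.2).choose_spec.1⟩) m
    have hD : ∀ m, (f (r + m)).app X (D (m + 1)).1 = (D m).1 :=
      fun m => (step m (D m).1 (D m).2).choose_spec.2
    set cc : ∀ n, ((F n).obj X) := fun n =>
      if h : r ≤ n then (eqToHom (congrArg F (Nat.add_sub_cancel' h))).app X (D (n - r)).1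
      else (towerFunctorComp F f n (r - n)).app X
        ((eqToHom (congrArg F (Nat.add_sub_cancel' (le_of_not_ge h)).symm)).app X g) with hcc
    have hstep : ∀ n, cc n = (f n).app X (cc (n + 1)) := by
      intro n
      rcases le_or_gt r n with h | h
      · obtain ⟨m, rfl⟩ : ∃ m, n = r + m := ⟨n - r, by omega⟩
        rw [hcc]
        dsimp only
        rw [dif_pos (Nat.le_add_right r m), dif_pos (by omega : r ≤ r + m + 1)]
        have gen : ∀ (u v : ℕ) (hu : u = m) (hv : v = m + 1)
            (pu : r + u = r + m) (pv : r + v = r + m + 1),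
            (eqToHom (congrArg F pu)).app X (D u).1
              = (f (r + m)).app X ((eqToHom (congrArg F pv)).app X (D v).1) := by
          rintro u v rfl rfl pu pv
          exact (hD _).symm
        exact gen (r + m - r) (r + m + 1 - r) (by omega) (by omega) (by omega) (by omega)
      · rcases eq_or_lt_of_le (by omega : n + 1 ≤ r) with h1' | h2'
        · -- r = n + 1
          rw [hcc]
          dsimp only
          rw [dif_neg (by omega), dif_pos (by omega : r ≤ n + 1)]
          have gen : ∀ (u v : ℕ) (hu : u = 1) (hv : v = 0)
              (pu : n + u = r) (pv : r + v = n + 1),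
              (towerFunctorComp F f n u).app X ((eqToHom (congrArg F pu.symm)).app X g)
                = (f n).app X ((eqToHom (congrArg F pv)).app X (D v).1) := by
            rintro u v rfl rfl pu pv
            subst h1'
            rfl
          exact gen (r - n) (n + 1 - r) (by omega) (by omega) (by omega) (by omega)
        · -- n + 1 < r
          rw [hcc]
          dsimp only
          rw [dif_neg (by omega), dif_neg (by omega)]
          have gen : ∀ (u v : ℕ) (hu : u = v + 1) (hv : r = n + 1 + v)
              (pu : n + u = r) (pv : (n + 1) + v = r),
              (towerFunctorComp F f n u).app X ((eqToHom (congrArg F pu.symm)).app X g)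
                = (f n).app X ((towerFunctorComp F f (n + 1) v).app X
                    ((eqToHom (congrArg F pv.symm)).app X g)) := by
            rintro u v rfl hv pu pv
            rw [comp_succ_left F f n v]
            have h3 := tp_tp F pu.symm
              (show n + (v + 1) = (n + 1) + v by omega) X g
            exact congrArg ((f n).app X ∘ (towerFunctorComp F f (n + 1) v).app X) h3
          exact gen (r - n) (r - (n + 1)) (by omega) (by omega) (by omega) (by omega)
    have hcc0 : cc = 0 := by
      apply (h1 X).injective
      funext n
      show cc n - (f n).app X (cc (n + 1)) = (0 : ((F n).obj X)) - (f n).app X 0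
      rw [← hstep n]
      simp
    have hr := congrFun hcc0 r
    rw [hcc] at hr
    dsimp only at hr
    rw [dif_pos (le_refl r)] at hr
    have gen0 : ∀ (u : ℕ) (hu : u = 0) (p : r + u = r),
        (eqToHom (congrArg F p)).app X (D u).1 = g := by
      rintro u rfl p
      rfl
    rw [gen0 (r - r) (by omega) (by omega)] at hr
    exact hr
  -- conclusion
  intro r
  refine ⟨K r + 1, Nat.succ_pos _, ?_⟩
  ext X x
  have hx : (towerFunctorComp F f r (K r + 1)).app X x
      = (towerFunctorComp F f r (K r)).app X ((f (r + K r)).app X x) := rfl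
  have hz : (towerFunctorComp F f r (K r + 1)).app X x = 0 := by
    rw [hx]
    exact vanish r X _ (s4 r X _ ⟨(f (r + K r)).app X x, rfl⟩)
  simpa using hz

end rest

end TPZ

/-- Let `C` be a category admitting countable coproducts and `⋯ → F_{r+1} → F_r → ⋯ → F_0`
a tower of functors `C → Ab`.  Suppose (1) for each `X : C` the map
`(a_r)_r ↦ (a_r - f_r (a_{r+1}))_r` on `∏_r F_r(X)` is bijective (i.e. `lim` and `lim¹`
of the tower `{F_r(X)}` vanish), and (2) each `F_r` preserves countable coproducts.
Then the tower `{F_r}` is pro-zero: for each `r` there is `s > r` (i.e. `s = r + k`,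
`k > 0`) so that the composite `F_s ⟶ F_r` is the zero natural transformation. -/
theorem tower_of_functors_pro_zero {C : Type*} [Category C]
    [∀ (J : Type) [Countable J], Limits.HasColimitsOfShape (Discrete J) C]
    (F : ℕ → C ⥤ AddCommGrpCat) (f : ∀ r, F (r + 1) ⟶ F r)
    (h1 : ∀ X : C, Function.Bijective
      (fun (a : ∀ r, ((F r).obj X)) => (fun r => a r - ((f r).app X) (a (r + 1)) :
        ∀ r, ((F r).obj X))))
    (h2 : ∀ (r : ℕ) (J : Type) [Countable J],
      Limits.PreservesColimitsOfShape (Discrete J) (F r)) :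
    ∀ r : ℕ, ∃ k : ℕ, 0 < k ∧ towerFunctorComp F f r k = 0 := by
  have inst := ‹∀ (J : Type) [Countable J], Limits.HasColimitsOfShape (Discrete J) C›
  haveI hN : Limits.HasColimitsOfShape (Discrete ℕ) C := inst ℕ
  haveI hE : Limits.HasColimitsOfShape (Discrete Empty) C := inst Empty
  exact TPZ.provanish F f (∐ (fun x : Empty => (x.elim : C))) h1 (fun s => h2 s ℕ)
end

section
/- Let k be a field of characteristic p > 0 and let s ≥ 1 be an integer. If an element u of the ring k[t]/(t^{ps}) satisfies u^p = 1, then the image of u under the canonical projection k[t]/(t^{ps}) → k[t]/(t^s) equals 1. In particular, the transition map (k[t]/(t^{ps}))^× → (k[t]/(t^s))^× kills all p-torsion, so the pro abelian group {(k[t]/(t^s))^×}_s has no p-torsion. -/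
open Polynomial

/-- Let `k` be a field of characteristic `p > 0` and `s ≥ 1`.  If `u ∈ k[t]/(t^{p·s})`
satisfies `u ^ p = 1`, then the image of `u` under the canonical projection
`k[t]/(t^{p·s}) → k[t]/(t^s)` equals `1`.  In particular the transition maps of the tower
`{(k[t]/(t^s))ˣ}` kill all `p`-torsion. -/
theorem truncated_poly_transition_kills_p_torsion
    (k : Type*) [Field k] (p : ℕ) [hp : Fact p.Prime] [CharP k p]
    (s : ℕ) (hs : 1 ≤ s)
    (u : k[X] ⧸ (Ideal.span {X ^ (p * s)} : Ideal k[X]))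
    (hu : u ^ p = 1) :
    Ideal.Quotient.factor (S := Ideal.span {X ^ (p * s)}) (T := Ideal.span {X ^ s})
      (Ideal.span_singleton_le_span_singleton.mpr
        (pow_dvd_pow X (Nat.le_mul_of_pos_left s hp.out.pos))) u = 1 := by
  obtain ⟨f, rfl⟩ := Ideal.Quotient.mk_surjective u
  have h1 : (Ideal.Quotient.mk (Ideal.span {X ^ (p * s)} : Ideal k[X])) (f ^ p - 1) = 0 := by
    rw [map_sub, map_pow, hu, map_one, sub_self]
  have h2 : X ^ (p * s) ∣ f ^ p - 1 := by
    rwa [Ideal.Quotient.eq_zero_iff_mem, Ideal.mem_span_singleton] at h1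
  have h3 : f ^ p - 1 = (f - 1) ^ p := by
    haveI : CharP k[X] p := charP_of_injective_ringHom (C_injective (R := k)) p
    rw [sub_pow_char, one_pow]
  have h4 : X ^ s ∣ f - 1 := by
    have := (IsIntegrallyClosed.pow_dvd_pow_iff (R := k[X]) (a := X ^ s) (b := f - 1) hp.out.ne_zero).mp
    apply this
    rw [← pow_mul, mul_comm s p, ← h3]
    exact h2
  rw [Ideal.Quotient.factor_mk, ← sub_eq_zero, ← map_one (Ideal.Quotient.mk _), ← map_sub,
    Ideal.Quotient.eq_zero_iff_mem, Ideal.mem_span_singleton]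
  exact h4
end

section
/- Let R be a commutative noetherian ring, p a prime number, and let R̂ denote the p-adic completion of R (the inverse limit of the quotients R/p^nR). Then the canonical map R → R̂ induces (i) an isomorphism R/pR → R̂/pR̂, and (ii) a bijection from {x ∈ R : p·x = 0} to {x ∈ R̂ : p·x = 0}. (Together these say that R → R̂ induces an equivalence R ⊗^L_ℤ 𝔽_p ≃ R̂ ⊗^L_ℤ 𝔽_p.) -/
namespace PadicAux

open AdicCompletion

variable {R : Type*} [CommRing R] (I : Ideal R)
variable {M N : Type*} [AddCommGroup M] [Module R M] [AddCommGroup N] [Module R N]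

lemma map_of (f : M →ₗ[R] N) (x : M) :
    AdicCompletion.map I f (AdicCompletion.of I M x) = AdicCompletion.of I N (f x) := by
  ext n
  rfl

lemma of_eq_algebraMap (x : R) :
    AdicCompletion.of I R x = algebraMap R (AdicCompletion I R) x := rfl

lemma of_bijective (h : (I • ⊤ : Submodule R M) = ⊥) :
    Function.Bijective (AdicCompletion.of I M) := by
  have hn : ∀ n : ℕ, n ≠ 0 → (I ^ n • ⊤ : Submodule R M) = ⊥ := fun n hn =>
    le_bot_iff.mp (h ▸ Submodule.smul_mono_left (Ideal.pow_le_self hn))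
  constructor
  · intro x y hxy
    have h1 : Submodule.Quotient.mk (p := (I ^ 1 • ⊤ : Submodule R M)) x =
        Submodule.Quotient.mk (p := (I ^ 1 • ⊤ : Submodule R M)) y :=
      congrArg (fun z => z.val 1) hxy
    have := (Submodule.Quotient.eq _).mp h1
    rw [hn 1 one_ne_zero] at this
    simpa [sub_eq_zero] using this
  · intro y
    obtain ⟨x, hx⟩ := Submodule.Quotient.mk_surjective _ (y.val 1)
    refine ⟨x, AdicCompletion.ext fun n => ?_⟩
    rcases Nat.eq_zero_or_pos n with hn0 | hn0
    · subst hn0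
      have htop : (I ^ 0 • ⊤ : Submodule R M) = ⊤ := by simp
      have : Subsingleton (M ⧸ (I ^ 0 • ⊤ : Submodule R M)) :=
        Submodule.Quotient.subsingleton_iff.mpr htop
      exact Subsingleton.elim _ _
    · obtain ⟨z, hz⟩ := Submodule.Quotient.mk_surjective _ (y.val n)
      have ht : AdicCompletion.transitionMap I M hn0 (y.val n) = y.val 1 := y.property hn0
      rw [← hz, Submodule.mapQ_apply, LinearMap.id_apply] at ht
      have : z = x := by
        have := (Submodule.Quotient.eq _).mp (ht.trans hx.symm)
        rw [hn 1 one_ne_zero] at this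
        simpa [sub_eq_zero] using this
      simp [← hz, this]

lemma smul_top_bot {p : ℕ} (hI : I = Ideal.span {(p : R)})
    (hp : ∀ x : M, (p : R) • x = 0) :
    (I • ⊤ : Submodule R M) = ⊥ := by
  rw [eq_bot_iff]
  intro x hx
  refine Submodule.smul_induction_on hx (fun r hr m _ => ?_) (fun a b ha hb => ?_)
  · rw [hI, Ideal.mem_span_singleton] at hr
    obtain ⟨c, rfl⟩ := hr
    have : ((p : R) * c) • m = (p : R) • (c • m) := mul_smul _ _ _
    simp [this, hp]
  · simpa using add_mem ha hb


lemma exists_smul_eq {p : ℕ} (hI : I = Ideal.span {(p : R)})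
    (z : AdicCompletion I ↥I) :
    ∃ t : AdicCompletion I R, (p : R) • t = AdicCompletion.map I I.subtype z := by
  obtain ⟨s, rfl⟩ := AdicCompletion.mk_surjective I ↥I z
  have key : ∀ n : ℕ, ∃ u : R, ((s (n+1) : R)) - s n = (p : R) ^ (n+1) * u := by
    intro n
    have hmem : (s (n+1)) - s n ∈ (I ^ n • ⊤ : Submodule R ↥I) :=
      SModEq.sub_mem.mp (s.property (Nat.le_succ n)).symm
    have hmem2 : ((s (n+1) : R)) - s n ∈ Submodule.map I.subtype (I ^ n • ⊤ : Submodule R ↥I) :=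
      ⟨_, hmem, rfl⟩
    rw [Submodule.map_smul'', Submodule.map_top, Submodule.range_subtype,
      Ideal.smul_eq_mul, ← pow_succ] at hmem2
    have hmem3 : ((s (n+1) : R)) - s n ∈ Ideal.span {(p : R) ^ (n+1)} := by
      rw [← Ideal.span_singleton_pow, ← hI]; exact hmem2
    exact Ideal.mem_span_singleton.mp hmem3
  have h0 : ∃ t0 : R, (s 0 : R) = (p : R) * t0 := by
    have h : (s 0 : R) ∈ Ideal.span {(p : R)} := by rw [← hI]; exact (s 0).2
    exact Ideal.mem_span_singleton.mp h
  choose u hu using key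
  obtain ⟨t0, ht0⟩ := h0
  set t : ℕ → R := fun n => Nat.rec t0 (fun n tn => tn + (p : R) ^ n * u n) n with htdef
  have htsucc : ∀ n, t (n+1) = t n + (p : R) ^ n * u n := fun n => rfl
  have hpt : ∀ n, (p : R) * t n = s n := by
    intro n; induction n with
    | zero => exact ht0.symm
    | succ n ih =>
        calc (p : R) * t (n+1) = (p : R) * t n + (p : R) ^ (n+1) * u n := by
              rw [htsucc]; ring
          _ = (s n : R) + ((s (n+1) : R) - s n) := by rw [ih, ← hu n]
          _ = s (n+1) := by ring
  have hc : ∀ n, t n ≡ t (n+1) [SMOD (I ^ n • ⊤ : Submodule R R)] := by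
    intro n
    rw [SModEq.sub_mem]
    have : t n - t (n+1) = -((p : R) ^ n * u n) := by rw [htsucc]; ring
    rw [this, Ideal.smul_eq_mul, Ideal.mul_top, hI, Ideal.span_singleton_pow,
      Ideal.mem_span_singleton]
    exact dvd_neg.mpr (Dvd.intro _ rfl)
  refine ⟨AdicCompletion.mk I R (AdicCauchySequence.mk I R t hc), ?_⟩
  rw [AdicCompletion.map_mk, ← map_smul]
  congr 1
  apply Subtype.ext; funext n
  show (p : R) • t n = (s n : R)
  simpa [smul_eq_mul] using hpt n

end PadicAux

open AdicCompletion PadicAux in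
/-- Let `R` be a commutative noetherian ring, `p` a prime, and `R̂` the `p`-adic
completion of `R` (the inverse limit of the `R/p^n R`).  Then the canonical map
`R → R̂` induces (i) an isomorphism `R/pR ≅ R̂/pR̂` and (ii) a bijection between the
`p`-torsion of `R` and the `p`-torsion of `R̂`.  (Together: `R ⊗^L ℤ/p ≃ R̂ ⊗^L ℤ/p`.) -/
theorem noetherian_p_adic_completion_mod_p
    (R : Type*) [CommRing R] [IsNoetherianRing R] (p : ℕ) (hp : p.Prime) :
    Function.Bijective
      (Ideal.quotientMap
        (Ideal.span {(p : AdicCompletion (Ideal.span {(p : R)}) R)})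
        (algebraMap R (AdicCompletion (Ideal.span {(p : R)}) R))
        (by
          rw [Ideal.span_le, Set.singleton_subset_iff, SetLike.mem_coe, Ideal.mem_comap,
            map_natCast]
          exact Ideal.subset_span rfl)) ∧
    Set.BijOn (algebraMap R (AdicCompletion (Ideal.span {(p : R)}) R))
      {x : R | (p : R) * x = 0}
      {y : AdicCompletion (Ideal.span {(p : R)}) R | (p : _) * y = 0} := by
  set I : Ideal R := Ideal.span {(p : R)} with hIdef
  set A := AdicCompletion I R with hAdef
  have hpA : ((p : ℕ) : A) = algebraMap R A ((p : ℕ) : R) := (map_natCast _ p).symm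
  have hmul : ∀ c : A, ((p : ℕ) : A) * c = (p : R) • c := by
    intro c; rw [hpA, ← Algebra.smul_def]
  -- the quotient module Q = R / I
  have hQ : ∀ q : R ⧸ (I : Submodule R R), (p : R) • q = 0 := by
    intro q
    obtain ⟨a, rfl⟩ := Submodule.Quotient.mk_surjective _ q
    rw [← Submodule.Quotient.mk_smul, Submodule.Quotient.mk_eq_zero]
    exact Ideal.mem_span_singleton.mpr ⟨a, (smul_eq_mul _ _).symm⟩
  have hQbot : (I • ⊤ : Submodule R (R ⧸ (I : Submodule R R))) = ⊥ :=
    smul_top_bot I hIdef hQ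
  have ofQ_bij := of_bijective I hQbot
  have exact1 : Function.Exact (AdicCompletion.map I (Submodule.subtype (I : Submodule R R)))
      (AdicCompletion.map I (Submodule.mkQ (I : Submodule R R))) :=
    AdicCompletion.map_exact (Submodule.injective_subtype _)
      (LinearMap.exact_subtype_mkQ _) (Submodule.mkQ_surjective _)
  have hker : ∀ y : A, AdicCompletion.map I (Submodule.mkQ (I : Submodule R R)) y = 0 →
      ∃ t : A, (p : R) • t = y := by
    intro y hy
    obtain ⟨z, hz⟩ := (exact1 y).mp hy
    obtain ⟨t, ht⟩ := exists_smul_eq I hIdef z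
    exact ⟨t, by rw [ht, hz]⟩
  have hspan : ∀ y : A, y ∈ Ideal.span {((p : ℕ) : A)} ↔ ∃ t : A, (p : R) • t = y := by
    intro y
    rw [Ideal.mem_span_singleton]
    constructor
    · rintro ⟨c, rfl⟩; exact ⟨c, (hmul c).symm⟩
    · rintro ⟨t, rfl⟩; exact ⟨t, (hmul t).symm⟩
  have hQsmul : ∀ v : AdicCompletion I (R ⧸ (I : Submodule R R)), (p : R) • v = 0 := by
    intro v
    refine AdicCompletion.ext fun n => ?_
    obtain ⟨q, hq⟩ := Submodule.Quotient.mk_surjective _ (v.val n)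
    rw [AdicCompletion.val_smul_apply, AdicCompletion.val_zero_apply, ← hq,
      ← Submodule.Quotient.mk_smul, hQ, Submodule.Quotient.mk_zero]
  have hmapzero : ∀ y : A,
      AdicCompletion.map I (Submodule.mkQ (I : Submodule R R)) ((p : R) • y) = 0 := by
    intro y
    rw [LinearMap.map_smul_of_tower, hQsmul]
  -- torsion setup
  have hT : ∀ x : R, x ∈ LinearMap.ker (LinearMap.lsmul R R (p : R)) ↔ (p : R) * x = 0 := by
    intro x; rw [LinearMap.mem_ker, LinearMap.lsmul_apply, smul_eq_mul]
  set T : Submodule R R := LinearMap.ker (LinearMap.lsmul R R (p : R)) with hTdef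
  have hTbot : (I • ⊤ : Submodule R ↥T) = ⊥ := by
    refine smul_top_bot I hIdef fun x => ?_
    apply Subtype.ext
    show (p : R) • (x : R) = 0
    rw [smul_eq_mul]
    exact (hT x).mp x.2
  have ofT_bij := of_bijective I hTbot
  have injT : Function.Injective (AdicCompletion.map I (Submodule.subtype T)) :=
    AdicCompletion.map_injective I (Submodule.injective_subtype T)
  have hoftors : ∀ (x : R) (hx : (p : R) * x = 0),
      algebraMap R A x = AdicCompletion.map I (Submodule.subtype T)
        (AdicCompletion.of I ↥T ⟨x, (hT x).mpr hx⟩) := by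
    intro x hx
    rw [PadicAux.map_of, ← of_eq_algebraMap]
    rfl
  have hμ : ∀ w : A, AdicCompletion.map I (LinearMap.lsmul R R (p : R)) w = (p : R) • w := by
    intro w
    induction w using AdicCompletion.induction_on with
    | h a =>
        rw [AdicCompletion.map_mk, ← map_smul]
        congr 1
  have hfinN : Module.Finite R ↥(LinearMap.range (LinearMap.lsmul R R (p : R))) :=
    Module.Finite.iff_fg.mpr (IsNoetherian.noetherian _)
  have exact2 : Function.Exact (AdicCompletion.map I (Submodule.subtype T))
      (AdicCompletion.map I (LinearMap.lsmul R R (p : R)).rangeRestrict) :=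
    AdicCompletion.map_exact (Submodule.injective_subtype _)
      (by rw [LinearMap.exact_iff, LinearMap.ker_rangeRestrict, Submodule.range_subtype])
      (LinearMap.surjective_rangeRestrict _)
  refine ⟨⟨Ideal.quotientMap_injective' ?_, ?_⟩, ?_, ?_, ?_⟩
  · -- injectivity of the map on quotients
    intro x hx
    rw [Ideal.mem_comap] at hx
    obtain ⟨t, ht⟩ := (hspan _).mp hx
    have h1 : AdicCompletion.map I (Submodule.mkQ (I : Submodule R R))
        (algebraMap R A x) = AdicCompletion.of I _ (Submodule.mkQ (I : Submodule R R) x) := by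
      rw [← of_eq_algebraMap, PadicAux.map_of]
    have h2 := hmapzero t
    rw [ht] at h2
    rw [h2] at h1
    have h3 : Submodule.mkQ (I : Submodule R R) x = 0 := ofQ_bij.1 (by rw [← h1]; rfl)
    rwa [Submodule.mkQ_apply, Submodule.Quotient.mk_eq_zero] at h3
  · -- surjectivity of the map on quotients
    intro yb
    obtain ⟨y, rfl⟩ := Ideal.Quotient.mk_surjective yb
    obtain ⟨q0, hq0⟩ := ofQ_bij.2 (AdicCompletion.map I (Submodule.mkQ (I : Submodule R R)) y)
    obtain ⟨x, rfl⟩ := Submodule.Quotient.mk_surjective _ q0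
    refine ⟨Ideal.Quotient.mk I x, ?_⟩
    rw [Ideal.quotientMap_mk, Ideal.Quotient.mk_eq_mk_iff_sub_mem, hspan]
    apply hker
    rw [map_sub, ← of_eq_algebraMap, PadicAux.map_of, Submodule.mkQ_apply, hq0, sub_self]
  · -- MapsTo
    intro x hx
    have hx' : (p : R) * x = 0 := hx
    show ((p : ℕ) : A) * algebraMap R A x = 0
    rw [hpA, ← map_mul, hx', _root_.map_zero]
  · -- InjOn
    intro x1 h1 x2 h2 heq
    have h1' : (p : R) * x1 = 0 := h1
    have h2' : (p : R) * x2 = 0 := h2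
    have hd : (p : R) * (x1 - x2) = 0 := by rw [mul_sub, h1', h2', sub_zero]
    have h0 : algebraMap R A (x1 - x2) = 0 := by rw [map_sub, heq, sub_self]
    rw [hoftors _ hd] at h0
    have h0' : AdicCompletion.of I ↥T ⟨x1 - x2, (hT _).mpr hd⟩ = 0 :=
      injT (by rw [h0, _root_.map_zero])
    have : (⟨x1 - x2, (hT _).mpr hd⟩ : ↥T) = 0 := ofT_bij.1 (by rw [h0', _root_.map_zero])
    have := congrArg Subtype.val this
    simpa [sub_eq_zero] using this
  · -- SurjOn
    intro y hy
    have hy' : ((p : ℕ) : A) * y = 0 := hy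
    have hsmul0 : (p : R) • y = 0 := by rw [← hmul, hy']
    have hg'y : AdicCompletion.map I (LinearMap.lsmul R R (p : R)).rangeRestrict y = 0 := by
      apply AdicCompletion.map_injective I
        (Submodule.injective_subtype (LinearMap.range (LinearMap.lsmul R R (p : R))))
      rw [AdicCompletion.map_comp_apply, LinearMap.subtype_comp_codRestrict _ _, hμ y,
        hsmul0, _root_.map_zero]
    obtain ⟨z, hz⟩ := (exact2 y).mp hg'y
    obtain ⟨t0, rfl⟩ := ofT_bij.2 z
    rw [PadicAux.map_of, of_eq_algebraMap] at hz
    exact ⟨(t0 : R), (hT _).mp t0.2, hz⟩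
end
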